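/- Let q < 0, x₀ ∈ ℝ, v > 0, t₁ > 0 with x₀ + v t₁ < 0. Then the projection of the translated soliton φ₁(x) = e^{ixv} sech(x − x₀ − v t₁) onto the eigenstate satisfies the pointwise bound |Pφ₁(x)| ≤ C |q| e^{q|x|} ( e^{|q|(x₀ + v t₁)/2} + e^{(x₀ + v t₁)/2} ) for an absolute constant C. -/

import Mathlib

open Complex

open MeasureTheory Set in
lemma aux_exp_neg_abs_integrable : Integrable (fun y : ℝ => Real.exp (-|y|)) := by
  rw [← integrableOn_univ, ← Set.Iic_union_Ioi (a := (0:ℝ))]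
  apply IntegrableOn.union
  · refine (integrableOn_exp_Iic 0).congr_fun (fun y hy => ?_) measurableSet_Iic
    simp [abs_of_nonpos (mem_Iic.mp hy)]
  · refine (exp_neg_integrableOn_Ioi 0 one_pos).congr_fun (fun y hy => ?_) measurableSet_Ioi
    simp [abs_of_pos (mem_Ioi.mp hy)]

open MeasureTheory Set in
lemma aux_exp_neg_abs_integral : (∫ y : ℝ, Real.exp (-|y|)) = 2 := by
  have h1 : IntegrableOn (fun y : ℝ => Real.exp (-|y|)) (Iic 0) :=
    aux_exp_neg_abs_integrable.integrableOn
  have h2 : IntegrableOn (fun y : ℝ => Real.exp (-|y|)) (Ioi 0) :=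
    aux_exp_neg_abs_integrable.integrableOn
  rw [← intervalIntegral.integral_Iic_add_Ioi h1 h2]
  have e1 : (∫ y in Iic (0:ℝ), Real.exp (-|y|)) = ∫ y in Iic (0:ℝ), Real.exp y := by
    refine setIntegral_congr_fun measurableSet_Iic (fun y hy => ?_)
    simp [abs_of_nonpos (mem_Iic.mp hy)]
  have e2 : (∫ y in Ioi (0:ℝ), Real.exp (-|y|)) = ∫ y in Ioi (0:ℝ), Real.exp (-y) := by
    refine setIntegral_congr_fun measurableSet_Ioi (fun y hy => ?_)
    simp [abs_of_pos (mem_Ioi.mp hy)]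
  rw [e1, e2, integral_exp_Iic, integral_exp_neg_Ioi]
  norm_num

open MeasureTheory in
lemma aux_half_integrable : Integrable (fun y : ℝ => Real.exp (-|y| / 2)) := by
  have := aux_exp_neg_abs_integrable.comp_div (R := 2) two_ne_zero
  simpa [abs_div, neg_div] using this

open MeasureTheory in
lemma aux_half_integral : (∫ y : ℝ, Real.exp (-|y| / 2)) = 4 := by
  have : (∫ y : ℝ, Real.exp (-|y| / 2)) = ∫ y : ℝ, (fun t : ℝ => Real.exp (-|t|)) (y / 2) := by
    congr 1; funext y; simp [abs_div, neg_div]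
  rw [this, Measure.integral_comp_div (fun t : ℝ => Real.exp (-|t|)) 2,
    aux_exp_neg_abs_integral]
  norm_num

open MeasureTheory in
lemma aux_half_sub_integrable (a : ℝ) :
    Integrable (fun y : ℝ => Real.exp (-|y - a| / 2)) :=
  aux_half_integrable.comp_sub_right a

open MeasureTheory in
lemma aux_half_sub_integral (a : ℝ) : (∫ y : ℝ, Real.exp (-|y - a| / 2)) = 4 := by
  rw [show (fun y : ℝ => Real.exp (-|y - a| / 2))
      = fun y : ℝ => (fun t : ℝ => Real.exp (-|t| / 2)) (y - a) from rfl,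
    integral_sub_right_eq_self (fun t : ℝ => Real.exp (-|t| / 2)) a, aux_half_integral]

/-- Pointwise bound on the projection of the translated soliton
`φ₁(x) = e^{ixv} sech(x − x₀ − v t₁)` onto the eigenstate: for `q < 0` and
`x₀ + v t₁ < 0`,
`|Pφ₁(x)| ≤ C |q| e^{q|x|} (e^{|q|(x₀ + v t₁)/2} + e^{(x₀ + v t₁)/2})`,
where `(Pφ)(x) = |q| e^{q|x|} ∫ e^{q|y|} φ(y) dy`. -/
theorem stmt_10 :
    ∃ C : ℝ, 0 < C ∧ ∀ q x₀ v t₁ : ℝ, q < 0 → 0 < v → 0 < t₁ → x₀ + v * t₁ < 0 →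
      ∀ x : ℝ,
        ‖
            (((|q| * Real.exp (q * |x|) : ℝ) : ℂ) *
              ∫ y : ℝ, ((Real.exp (q * |y|) : ℝ) : ℂ) *
                (Complex.exp (I * (y : ℂ) * (v : ℂ)) * ((Real.cosh (y - x₀ - v * t₁))⁻¹ : ℝ)))‖ ≤
          C * |q| * Real.exp (q * |x|) *
            (Real.exp (|q| * (x₀ + v * t₁) / 2) + Real.exp ((x₀ + v * t₁) / 2)) := by
  refine ⟨8, by norm_num, ?_⟩
  intro q x₀ v t₁ hq hv ht ha x
  set a : ℝ := x₀ + v * t₁ with ha_def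
  set m : ℝ := min |q| 1 with hm_def
  have hm0 : 0 ≤ m := le_min (abs_nonneg q) zero_le_one
  have hmq : m ≤ |q| := min_le_left _ _
  have hm1 : m ≤ 1 := min_le_right _ _
  -- the norm of the integrand
  have hnorm : ∀ y : ℝ,
      ‖((Real.exp (q * |y|) : ℝ) : ℂ) *
        (Complex.exp (I * (y : ℂ) * (v : ℂ)) * ((Real.cosh (y - x₀ - v * t₁))⁻¹ : ℝ))‖
      = Real.exp (q * |y|) * (Real.cosh (y - a))⁻¹ := by
    intro y
    have h1 : I * (y : ℂ) * (v : ℂ) = ((y * v : ℝ) : ℂ) * I := by push_cast; ring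
    have h2 : ‖Complex.exp (I * (y : ℂ) * (v : ℂ))‖ = 1 := by
      rw [h1, Complex.norm_exp_ofReal_mul_I]
    have h3 : y - x₀ - v * t₁ = y - a := by rw [ha_def]; ring
    rw [norm_mul, norm_mul, h2, Complex.norm_real, Complex.norm_real, Real.norm_eq_abs, Real.norm_eq_abs, h3,
      _root_.abs_of_nonneg (Real.exp_pos _).le, _root_.abs_of_nonneg (inv_nonneg.mpr (Real.cosh_pos _).le)]
    ring
  -- the pointwise bound
  have hpt : ∀ y : ℝ, Real.exp (q * |y|) * (Real.cosh (y - a))⁻¹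
      ≤ 2 * Real.exp (m * a / 2) * Real.exp (-|y - a| / 2) := by
    intro y
    have hsech : (Real.cosh (y - a))⁻¹ ≤ 2 * Real.exp (-|y - a|) := by
      have h1 : Real.exp |y - a| / 2 ≤ Real.cosh (y - a) := by
        have := Real.exp_abs_le (y - a)
        rw [Real.cosh_eq]
        linarith
      have h2 : (0:ℝ) < Real.exp |y - a| / 2 := by positivity
      calc (Real.cosh (y - a))⁻¹ ≤ (Real.exp |y - a| / 2)⁻¹ := by
            exact inv_anti₀ h2 h1
        _ = 2 * Real.exp (-|y - a|) := by
            rw [Real.exp_neg]; field_simp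
    have hexp : Real.exp (q * |y|) * Real.exp (-|y - a|)
        ≤ Real.exp (m * a / 2) * Real.exp (-|y - a| / 2) := by
      rw [← Real.exp_add, ← Real.exp_add]
      apply Real.exp_le_exp.mpr
      have htri : |a| ≤ |y| + |y - a| := by
        have : a = y - (y - a) := by ring
        calc |a| = |y - (y - a)| := by rw [← this]
          _ ≤ |y| + |y - a| := abs_sub _ _
      have haneg : a = -|a| := by rw [abs_of_neg ha]; ring
      have h1 : q * |y| ≤ -m * |y| := by
        have : q = -|q| := by rw [abs_of_neg hq]; ring
        nlinarith [abs_nonneg y]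
      nlinarith [abs_nonneg y, abs_nonneg (y - a)]
    calc Real.exp (q * |y|) * (Real.cosh (y - a))⁻¹
        ≤ Real.exp (q * |y|) * (2 * Real.exp (-|y - a|)) := by
          exact mul_le_mul_of_nonneg_left hsech (Real.exp_pos _).le
      _ = 2 * (Real.exp (q * |y|) * Real.exp (-|y - a|)) := by ring
      _ ≤ 2 * (Real.exp (m * a / 2) * Real.exp (-|y - a| / 2)) := by linarith [hexp]
      _ = 2 * Real.exp (m * a / 2) * Real.exp (-|y - a| / 2) := by ring
  -- integral bound
  have hgint : MeasureTheory.Integrable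
      (fun y : ℝ => 2 * Real.exp (m * a / 2) * Real.exp (-|y - a| / 2)) :=
    (aux_half_sub_integrable a).const_mul _
  have hIb : (∫ y : ℝ, Real.exp (q * |y|) * (Real.cosh (y - a))⁻¹)
      ≤ 8 * Real.exp (m * a / 2) := by
    have := MeasureTheory.integral_mono_of_nonneg
      (f := fun y : ℝ => Real.exp (q * |y|) * (Real.cosh (y - a))⁻¹)
      (g := fun y : ℝ => 2 * Real.exp (m * a / 2) * Real.exp (-|y - a| / 2))
      (Filter.Eventually.of_forall fun y => by positivity) hgint
      (Filter.Eventually.of_forall hpt)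
    have hval : (∫ y : ℝ, 2 * Real.exp (m * a / 2) * Real.exp (-|y - a| / 2))
        = 8 * Real.exp (m * a / 2) := by
      rw [MeasureTheory.integral_const_mul, aux_half_sub_integral]; ring
    linarith [this, hval.le, hval.ge]
  -- exp(m a / 2) ≤ sum
  have hsum : Real.exp (m * a / 2) ≤ Real.exp (|q| * a / 2) + Real.exp (a / 2) := by
    rcases min_cases |q| 1 with ⟨h, _⟩ | ⟨h, _⟩
    · rw [hm_def, h]
      linarith [(Real.exp_pos (a / 2)).le]
    · rw [hm_def, h, one_mul]
      linarith [(Real.exp_pos (|q| * a / 2)).le]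
  -- assemble
  rw [norm_mul, Complex.norm_real, Real.norm_eq_abs,
    _root_.abs_of_nonneg (by positivity : (0:ℝ) ≤ |q| * Real.exp (q * |x|))]
  have hInorm : ‖(∫ y : ℝ, ((Real.exp (q * |y|) : ℝ) : ℂ) *
      (Complex.exp (I * (y : ℂ) * (v : ℂ)) * ((Real.cosh (y - x₀ - v * t₁))⁻¹ : ℝ)))‖
      ≤ 8 * Real.exp (m * a / 2) := by
    refine le_trans (MeasureTheory.norm_integral_le_integral_norm _) ?_
    calc (∫ y : ℝ, ‖((Real.exp (q * |y|) : ℝ) : ℂ) *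
          (Complex.exp (I * (y : ℂ) * (v : ℂ)) * ((Real.cosh (y - x₀ - v * t₁))⁻¹ : ℝ))‖)
        = ∫ y : ℝ, Real.exp (q * |y|) * (Real.cosh (y - a))⁻¹ := by
          congr 1; funext y; exact hnorm y
      _ ≤ 8 * Real.exp (m * a / 2) := hIb
  calc |q| * Real.exp (q * |x|) * ‖(∫ y : ℝ, ((Real.exp (q * |y|) : ℝ) : ℂ) *
        (Complex.exp (I * (y : ℂ) * (v : ℂ)) * ((Real.cosh (y - x₀ - v * t₁))⁻¹ : ℝ)))‖
      ≤ |q| * Real.exp (q * |x|) * (8 * Real.exp (m * a / 2)) := by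
        exact mul_le_mul_of_nonneg_left hInorm (by positivity)
    _ ≤ |q| * Real.exp (q * |x|) * (8 * (Real.exp (|q| * a / 2) + Real.exp (a / 2))) := by
        apply mul_le_mul_of_nonneg_left _ (by positivity)
        linarith
    _ = 8 * |q| * Real.exp (q * |x|) * (Real.exp (|q| * a / 2) + Real.exp (a / 2)) := by ring
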